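/- Let F be a σ-fact, Σ a GC² theory over the arity-≤2 relations, Δ a set of existential rules over σ, and q a Boolean conjunctive query over σ, and let Θ be the conjunction of the existential closure of SHR(F), Σ, SHR(Δ), Wellformed(σs), and ¬SHR(q). If Θ has a model (a σs-interpretation satisfying it), then Θ has a redundancy-free model. -/

import Mathlib

/-- A relational signature: relation names with arities. -/
structure Sig : Type 1 where
  Rel : Type
  ar : Rel → ℕ

/-- An interpretation of a signature: a domain and, for each relation,
a set of tuples (lists of the right length). -/
structure Interp (σ : Sig) : Type 1 where
  Dom : Type
  rel : σ.Rel → Set (List Dom)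
  wf : ∀ R l, l ∈ rel R → l.length = σ.ar R

/-- An atom over variables `V`. -/
structure Atom (σ : Sig) (V : Type) where
  R : σ.Rel
  args : Fin (σ.ar R) → V

/-- A conjunction of atoms over variables `V`. -/
abbrev Conj (σ : Sig) (V : Type) := List (Atom σ V)

def Atom.vmap {σ : Sig} {V W : Type} (f : V → W) (A : Atom σ V) : Atom σ W :=
  ⟨A.R, f ∘ A.args⟩

def Conj.vmap {σ : Sig} {V W : Type} (f : V → W) (Φ : Conj σ V) : Conj σ W :=
  Φ.map (Atom.vmap f)

def satAtom {σ : Sig} (I : Interp σ) {V : Type} (ν : V → I.Dom) (A : Atom σ V) : Prop :=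
  (List.ofFn fun i => ν (A.args i)) ∈ I.rel A.R

def satConj {σ : Sig} (I : Interp σ) {V : Type} (ν : V → I.Dom) (Φ : Conj σ V) : Prop :=
  ∀ A ∈ Φ, satAtom I ν A

/-- A variable occurs in an atom. -/
def occursIn {σ : Sig} {V : Type} (v : V) (A : Atom σ V) : Prop := ∃ i, A.args i = v

/-- The Gaifman graph of a conjunction of atoms. -/
def gaifmanC {σ : Sig} {V : Type} (Φ : Conj σ V) : SimpleGraph V where
  Adj u v := u ≠ v ∧ ∃ A ∈ Φ, occursIn u A ∧ occursIn v A
  symm := by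
    constructor
    intro u v h
    exact ⟨h.1.symm, by obtain ⟨A, hA, h1, h2⟩ := h.2; exact ⟨A, hA, h2, h1⟩⟩
  loopless := by constructor; intro v h; exact h.1 rfl

/-- The Gaifman graph of an interpretation. -/
def gaifmanI {σ : Sig} (I : Interp σ) : SimpleGraph I.Dom where
  Adj a b := a ≠ b ∧ ∃ R l, l ∈ I.rel R ∧ a ∈ l ∧ b ∈ l
  symm := by
    constructor
    intro a b h
    exact ⟨h.1.symm, by obtain ⟨R, l, hl, h1, h2⟩ := h.2; exact ⟨R, l, hl, h2, h1⟩⟩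
  loopless := by constructor; intro a h; exact h.1 rfl

/-- The relation names of the shredded signature. -/
inductive SRel (σ : Sig) : Type
  | low (R : σ.Rel) (h : σ.ar R ≤ 2)
  | elt
  | tag (R : σ.Rel) (h : 2 < σ.ar R)
  | proj (R : σ.Rel) (h : 2 < σ.ar R) (i : Fin (σ.ar R))

/-- The shredded signature σs. -/
def sSig (σ : Sig) : Sig where
  Rel := SRel σ
  ar := fun r => match r with
    | .low R _ => σ.ar R
    | .elt => 1
    | .tag _ _ => 1
    | .proj _ _ _ => 2

/-- Shredding of an atom (with the fresh tuple variable `t`). -/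
def shredAtom {σ : Sig} {V T : Type} (A : Atom σ V) (t : T) : Conj (sSig σ) (V ⊕ T) :=
  if h : σ.ar A.R ≤ 2 then
    [⟨SRel.low A.R h, fun i => Sum.inl (A.args i)⟩]
  else
    ⟨SRel.tag A.R (lt_of_not_ge h), fun _ => Sum.inr t⟩ ::
    (List.finRange (σ.ar A.R)).map (fun i =>
      ⟨SRel.proj A.R (lt_of_not_ge h) i,
       fun j => if j.val = 0 then Sum.inr t else Sum.inl (A.args i)⟩)

/-- Shredding of a conjunction of atoms: one fresh variable per atom. -/
def shredConj {σ : Sig} {V : Type} (Φ : Conj σ V) : Conj (sSig σ) (V ⊕ Fin Φ.length) :=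
  (List.finRange Φ.length).flatMap (fun k => shredAtom (Φ.get k) k)

/-- The fresh elements of the shredding of an interpretation: one per higher-arity tuple. -/
def HighTuple {σ : Sig} (I : Interp σ) : Type :=
  Σ R : σ.Rel, {l : List I.Dom // l ∈ I.rel R ∧ 2 < σ.ar R}

/-- The shredding of an interpretation. -/
def shredInterp {σ : Sig} (I : Interp σ) : Interp (sSig σ) where
  Dom := I.Dom ⊕ HighTuple I
  rel := fun r => match r with
    | .low R _ => {l | ∃ l₀ ∈ I.rel R, l = l₀.map Sum.inl}
    | .elt => {l | ∃ a : I.Dom, l = [Sum.inl a]}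
    | .tag R _ => {l | ∃ t : HighTuple I, t.1 = R ∧ l = [Sum.inr t]}
    | .proj R _ i => {l | ∃ t : HighTuple I, t.1 = R ∧
        ∃ a : I.Dom, t.2.val[i.val]? = some a ∧ l = [Sum.inr t, Sum.inl a]}
  wf := by
    rintro r l hl
    cases r with
    | low R h => obtain ⟨l₀, h₀, rfl⟩ := hl; simpa [sSig] using I.wf R l₀ h₀
    | elt => obtain ⟨a, rfl⟩ := hl; rfl
    | tag R h => obtain ⟨t, _, rfl⟩ := hl; rfl
    | proj R h i => obtain ⟨t, _, a, _, rfl⟩ := hl; rfl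

/-- Homomorphisms of interpretations. -/
def IsHom {σ : Sig} (I I' : Interp σ) (h : I.Dom → I'.Dom) : Prop :=
  ∀ R l, l ∈ I.rel R → l.map h ∈ I'.rel R

/-- Existential rules: body over variables `B`, head over `B ⊕ E`
(`B`-variables occurring in the head are the frontier). -/
structure ExRule (σ : Sig) : Type 1 where
  B : Type
  E : Type
  body : Conj σ B
  head : Conj σ (B ⊕ E)

def satRule {σ : Sig} (I : Interp σ) (τ : ExRule σ) : Prop :=
  ∀ ν : τ.B → I.Dom, satConj I ν τ.body →
    ∃ μ : τ.E → I.Dom, satConj I (Sum.elim ν μ) τ.head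

/-- Shredding of an existential rule. -/
def shredRule {σ : Sig} (τ : ExRule σ) : ExRule (sSig σ) where
  B := τ.B ⊕ Fin τ.body.length
  E := τ.E ⊕ Fin τ.head.length
  body := shredConj τ.body
  head := (shredConj τ.head).vmap
    (Sum.elim (Sum.elim (Sum.inl ∘ Sum.inl) (Sum.inr ∘ Sum.inl)) (fun k => Sum.inr (Sum.inr k)))

/-- The `Elt`-elements of a σs-interpretation. -/
def EltDom {σ : Sig} (J : Interp (sSig σ)) : Type :=
  {a : J.Dom // [a] ∈ J.rel SRel.elt}

/-- The unshredding of a σs-interpretation. -/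
def unshred {σ : Sig} (J : Interp (sSig σ)) : Interp σ where
  Dom := EltDom J
  rel := fun R =>
    if h : σ.ar R ≤ 2 then
      {l | l.length = σ.ar R ∧ l.map Subtype.val ∈ J.rel (SRel.low R h)}
    else
      {l | ∃ hl : l.length = σ.ar R, ∃ t : J.Dom,
        [t] ∈ J.rel (SRel.tag R (lt_of_not_ge h)) ∧
        ∀ i : Fin (σ.ar R),
          [t, (l.get (Fin.cast hl.symm i)).val] ∈ J.rel (SRel.proj R (lt_of_not_ge h) i)}
  wf := by
    intro R l hl
    by_cases h : σ.ar R ≤ 2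
    · rw [dif_pos h] at hl; exact hl.1
    · rw [dif_neg h] at hl; exact hl.1

/-- The structural conditions satisfied by shreddings (`Wellformed(σs)`). -/
def WellFormed {σ : Sig} (J : Interp (sSig σ)) : Prop :=
  (∀ (R : σ.Rel) (h : 2 < σ.ar R) (a : J.Dom),
      [a] ∈ J.rel (SRel.tag R h) → [a] ∉ J.rel SRel.elt) ∧
  (∀ (R : σ.Rel) (h : 2 < σ.ar R) (R' : σ.Rel) (h' : 2 < σ.ar R') (a : J.Dom),
      [a] ∈ J.rel (SRel.tag R h) → [a] ∈ J.rel (SRel.tag R' h') → R = R') ∧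
  (∀ a : J.Dom, [a] ∈ J.rel SRel.elt ∨ ∃ (R : σ.Rel) (h : 2 < σ.ar R), [a] ∈ J.rel (SRel.tag R h)) ∧
  (∀ (R : σ.Rel) (h : 2 < σ.ar R) (i : Fin (σ.ar R)) (t a : J.Dom),
      [t, a] ∈ J.rel (SRel.proj R h i) →
        [t] ∈ J.rel (SRel.tag R h) ∧ [a] ∈ J.rel SRel.elt) ∧
  (∀ (R : σ.Rel) (h : 2 < σ.ar R) (t : J.Dom), [t] ∈ J.rel (SRel.tag R h) →
      ∀ i : Fin (σ.ar R), ∃! a : J.Dom, [t, a] ∈ J.rel (SRel.proj R h i)) ∧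
  (∀ (R : σ.Rel) (h : σ.ar R ≤ 2) (l : List J.Dom), l ∈ J.rel (SRel.low R h) →
      ∀ a ∈ l, [a] ∈ J.rel SRel.elt)

/-- Redundancy-freeness: no two distinct tuple-elements code the same tuple. -/
def RedundancyFree {σ : Sig} (J : Interp (sSig σ)) : Prop :=
  ∀ (R : σ.Rel) (h : 2 < σ.ar R) (t t' : J.Dom) (f : Fin (σ.ar R) → J.Dom),
    (∀ i, [t, f i] ∈ J.rel (SRel.proj R h i) ∧ [t', f i] ∈ J.rel (SRel.proj R h i)) → t = t'

/-- Isomorphism of interpretations. -/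
structure InterpIso {σ : Sig} (I I' : Interp σ) where
  e : I.Dom ≃ I'.Dom
  hrel : ∀ R l, l ∈ I.rel R ↔ l.map e ∈ I'.rel R

/-- GC²: the guarded two-variable fragment with counting quantifiers
(atoms have arity ≤ 2; guards of counting quantifiers use both variables). -/
inductive GC2 (σ : Sig) : Type
  | atom (R : σ.Rel) (har : σ.ar R ≤ 2) (args : Fin (σ.ar R) → Fin 2)
  | eq (v w : Fin 2)
  | neg (φ : GC2 σ)
  | conj (φ ψ : GC2 σ)
  | count (v : Fin 2) (n : ℕ) (R : σ.Rel) (har : σ.ar R ≤ 2)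
      (gargs : Fin (σ.ar R) → Fin 2) (hg : ∀ w : Fin 2, ∃ i, gargs i = w)
      (φ : GC2 σ)

def GC2.eval {σ : Sig} (I : Interp σ) : GC2 σ → (Fin 2 → I.Dom) → Prop
  | .atom R _ args, ν => (List.ofFn fun i => ν (args i)) ∈ I.rel R
  | .eq v w, ν => ν v = ν w
  | .neg φ, ν => ¬ φ.eval I ν
  | .conj φ ψ, ν => φ.eval I ν ∧ ψ.eval I ν
  | .count v n R _ gargs _ φ, ν =>
      ∃ s : Finset I.Dom, n ≤ s.card ∧ ∀ b ∈ s,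
        ((List.ofFn fun i => Function.update ν v b (gargs i)) ∈ I.rel R) ∧
        φ.eval I (Function.update ν v b)

def GC2.size {σ : Sig} : GC2 σ → ℕ
  | .atom _ _ _ => 1
  | .eq _ _ => 1
  | .neg φ => φ.size + 1
  | .conj φ ψ => φ.size + ψ.size + 1
  | .count _ _ _ _ _ _ φ => φ.size + 1

/-- A GC² theory holds in an interpretation (formulas read universally closed). -/
def satTheory {σ : Sig} (I : Interp σ) (Θ : Set (GC2 σ)) : Prop :=
  ∀ φ ∈ Θ, ∀ ν : Fin 2 → I.Dom, φ.eval I ν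

/-- A GC² formula mentions only the arity-≤2 relations of the original signature σ. -/
def GC2.onlyLow {σ : Sig} : GC2 (sSig σ) → Prop
  | .atom R _ _ => ∃ R₀ h, R = SRel.low R₀ h
  | .eq _ _ => True
  | .neg φ => φ.onlyLow
  | .conj φ ψ => φ.onlyLow ∧ ψ.onlyLow
  | .count _ _ R _ _ _ φ => (∃ R₀ h, R = SRel.low R₀ h) ∧ φ.onlyLow


namespace RFAux

variable {σ : Sig} (J : Interp (sSig σ))

/-- Two elements code the same tuple (or are equal). -/
def REq (t t' : J.Dom) : Prop :=
  t = t' ∨ ∃ (R : σ.Rel) (h : 2 < σ.ar R) (f : Fin (σ.ar R) → J.Dom),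
    ∀ i, [t, f i] ∈ J.rel (SRel.proj R h i) ∧ [t', f i] ∈ J.rel (SRel.proj R h i)

variable (hW : WellFormed J)
include hW

theorem proj_transfer {t s a : J.Dom} {R : σ.Rel} {h : 2 < σ.ar R} {i : Fin (σ.ar R)}
    (hts : REq J t s) (hsa : [s, a] ∈ J.rel (SRel.proj R h i)) :
    [t, a] ∈ J.rel (SRel.proj R h i) := by
  rcases hts with rfl | ⟨R₀, h₀, f, hf⟩
  · exact hsa
  · have i₀ : Fin (σ.ar R₀) := ⟨0, by omega⟩
    have hsR₀ : [s] ∈ J.rel (SRel.tag R₀ h₀) := (hW.2.2.2.1 R₀ h₀ i₀ s (f i₀) (hf i₀).2).1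
    have hsR : [s] ∈ J.rel (SRel.tag R h) := (hW.2.2.2.1 R h i s a hsa).1
    obtain rfl : R = R₀ := hW.2.1 R h R₀ h₀ s hsR hsR₀
    have huniq := hW.2.2.2.2.1 R h s hsR i
    have : a = f i := huniq.unique hsa (hf i).2
    rw [this]; exact (hf i).1

theorem tag_transfer {t s : J.Dom} {R : σ.Rel} {h : 2 < σ.ar R}
    (hts : REq J t s) (hs : [s] ∈ J.rel (SRel.tag R h)) :
    [t] ∈ J.rel (SRel.tag R h) := by
  rcases hts with rfl | ⟨R₀, h₀, f, hf⟩
  · exact hs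
  · have i₀ : Fin (σ.ar R₀) := ⟨0, by omega⟩
    have htR₀ : [t] ∈ J.rel (SRel.tag R₀ h₀) := (hW.2.2.2.1 R₀ h₀ i₀ t (f i₀) (hf i₀).1).1
    have hsR₀ : [s] ∈ J.rel (SRel.tag R₀ h₀) := (hW.2.2.2.1 R₀ h₀ i₀ s (f i₀) (hf i₀).2).1
    obtain rfl : R = R₀ := hW.2.1 R h R₀ h₀ s hs hsR₀
    exact htR₀

theorem REq_equiv : Equivalence (REq J) := by
  constructor
  · intro t; exact Or.inl rfl
  · intro t s h
    rcases h with rfl | ⟨R, hR, f, hf⟩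
    · exact Or.inl rfl
    · exact Or.inr ⟨R, hR, f, fun i => ⟨(hf i).2, (hf i).1⟩⟩
  · intro t s u hts hsu
    rcases hts with rfl | ⟨R, hR, f, hf⟩
    · exact hsu
    · have hus : REq J u s := by
        rcases hsu with rfl | ⟨R', hR', g, hg⟩
        · exact Or.inl rfl
        · exact Or.inr ⟨R', hR', g, fun i => ⟨(hg i).2, (hg i).1⟩⟩
      exact Or.inr ⟨R, hR, f, fun i => ⟨(hf i).1, proj_transfer J hW hus (hf i).2⟩⟩

/-- The setoid of tuple-coding. -/
def S : Setoid J.Dom := ⟨REq J, REq_equiv J hW⟩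

/-- Choice of representative in each class. -/
noncomputable def rep (a : J.Dom) : J.Dom := (Quotient.mk (S J hW) a).out

theorem rep_rel (a : J.Dom) : REq J (rep J hW a) a := Quotient.mk_out (s := S J hW) a

theorem rep_eq_of_rel {a b : J.Dom} (h : REq J a b) : rep J hW a = rep J hW b := by
  unfold rep
  congr 1
  exact Quotient.sound h

theorem rep_idem (a : J.Dom) : rep J hW (rep J hW a) = rep J hW a :=
  rep_eq_of_rel J hW (rep_rel J hW a)

theorem eq_of_rel_elt {a b : J.Dom} (h : REq J b a) (ha : [a] ∈ J.rel SRel.elt) : b = a := by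
  rcases h with rfl | ⟨R, hR, f, hf⟩
  · rfl
  · have i₀ : Fin (σ.ar R) := ⟨0, by omega⟩
    have : [a] ∈ J.rel (SRel.tag R hR) := (hW.2.2.2.1 R hR i₀ a (f i₀) (hf i₀).2).1
    exact absurd ha (hW.1 R hR a this)

theorem elt_rep {a : J.Dom} (ha : [a] ∈ J.rel SRel.elt) : rep J hW a = a :=
  eq_of_rel_elt J hW (rep_rel J hW a) ha

/-- The induced substructure on the representatives. -/
@[reducible]
noncomputable def DInterp : Interp (sSig σ) where
  Dom := {a : J.Dom // rep J hW a = a}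
  rel := fun r => {l | l.map Subtype.val ∈ J.rel r}
  wf := by intro r l hl; simpa using J.wf r _ hl

theorem rep_hom : ∀ (r : (sSig σ).Rel) (l : List J.Dom),
    l ∈ J.rel r → l.map (rep J hW) ∈ J.rel r := by
  intro r l hl
  have hlen := J.wf r l hl
  cases r with
  | low R h =>
    have : l.map (rep J hW) = l.map id :=
      List.map_congr_left (fun a ha => elt_rep J hW (hW.2.2.2.2.2 R h l hl a ha))
    rw [this, List.map_id]; exact hl
  | elt =>
    obtain ⟨a, rfl⟩ := List.length_eq_one_iff.mp hlen
    simpa [elt_rep J hW hl] using hl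
  | tag R h =>
    obtain ⟨a, rfl⟩ := List.length_eq_one_iff.mp hlen
    simpa using tag_transfer J hW (rep_rel J hW a) hl
  | proj R h i =>
    obtain ⟨t, a, rfl⟩ := List.length_eq_two.mp hlen
    have ha : [a] ∈ J.rel SRel.elt := (hW.2.2.2.1 R h i t a hl).2
    have := proj_transfer J hW (hts := rep_rel J hW t) hl
    simpa [elt_rep J hW ha] using this

/-- Pushing a valuation into the substructure. -/
noncomputable def push (a : J.Dom) : (DInterp J hW).Dom := ⟨rep J hW a, rep_idem J hW a⟩

theorem sat_push {V : Type} {ν : V → J.Dom} {Φ : Conj (sSig σ) V}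
    (h : satConj J ν Φ) : satConj (DInterp J hW) (fun v => push J hW (ν v)) Φ := by
  intro A hA
  show (List.ofFn fun i => push J hW (ν (A.args i))).map Subtype.val ∈ J.rel A.R
  rw [List.map_ofFn]
  have : (Subtype.val ∘ fun i => push J hW (ν (A.args i)))
      = fun i => rep J hW (ν (A.args i)) := rfl
  rw [this]
  have h2 : (List.ofFn fun i => rep J hW (ν (A.args i)))
      = (List.ofFn fun i => ν (A.args i)).map (rep J hW) := by
    rw [List.map_ofFn]; rfl
  rw [h2]
  exact rep_hom J hW _ _ (h A hA)

theorem sat_pull {V : Type} {ν : V → (DInterp J hW).Dom} {Φ : Conj (sSig σ) V}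
    (h : satConj (DInterp J hW) ν Φ) : satConj J (fun v => (ν v).val) Φ := by
  intro A hA
  have := h A hA
  show (List.ofFn fun i => (ν (A.args i)).val) ∈ J.rel A.R
  have h2 : (List.ofFn fun i => (ν (A.args i)).val)
      = (List.ofFn fun i => ν (A.args i)).map Subtype.val := by
    rw [List.map_ofFn]; rfl
  rw [h2]
  exact this

theorem val_update (ν : Fin 2 → (DInterp J hW).Dom) (v : Fin 2) (b : (DInterp J hW).Dom) :
    (fun w => (Function.update ν v b w).val)
      = Function.update (fun w => (ν w).val) v b.val := by
  funext w
  by_cases hw : w = v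
  · subst hw; simp
  · simp [Function.update_of_ne hw]

theorem eval_iff (φ : GC2 (sSig σ)) (hlow : φ.onlyLow) (ν : Fin 2 → (DInterp J hW).Dom) :
    φ.eval (DInterp J hW) ν ↔ φ.eval J (fun v => (ν v).val) := by
  induction φ generalizing ν with
  | atom R har args =>
    show (List.ofFn fun i => ν (args i)) ∈ (DInterp J hW).rel R ↔ _
    show (List.ofFn fun i => ν (args i)).map Subtype.val ∈ J.rel R ↔ _
    rw [List.map_ofFn]
    rfl
  | eq v w => exact Subtype.ext_iff
  | neg φ ih => exact not_congr (ih hlow ν)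
  | conj φ ψ ih1 ih2 => exact and_congr (ih1 hlow.1 ν) (ih2 hlow.2 ν)
  | count v n R har gargs hg φ ih =>
    obtain ⟨⟨R₀, h₀, rfl⟩, hφ⟩ := hlow
    classical
    constructor
    · rintro ⟨s, hn, hs⟩
      refine ⟨s.image Subtype.val, ?_, ?_⟩
      · rwa [Finset.card_image_of_injective s Subtype.val_injective]
      · intro b hb
        obtain ⟨b₀, hb₀, rfl⟩ := Finset.mem_image.mp hb
        obtain ⟨hguard, heval⟩ := hs b₀ hb₀
        constructor
        · rw [show (b₀ : J.Dom) = (b₀ : (DInterp J hW).Dom).val from rfl,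
            ← val_update J hW ν v b₀]
          have h2 : (List.ofFn fun i => (Function.update ν v b₀ (gargs i)).val)
              = (List.ofFn fun i => Function.update ν v b₀ (gargs i)).map Subtype.val := by
            rw [List.map_ofFn]; rfl
          rw [h2]
          exact hguard
        · have := (ih hφ (Function.update ν v b₀)).mp heval
          rwa [val_update J hW ν v b₀] at this
    · rintro ⟨s, hn, hs⟩
      have helt : ∀ b ∈ s, rep J hW b = b := by
        intro b hb
        obtain ⟨i, hi⟩ := hg v
        have hguard := (hs b hb).1
        have hmem : b ∈ (List.ofFn fun i => Function.update (fun w => (ν w).val) v b (gargs i)) := by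
          rw [List.mem_ofFn]
          refine ⟨i, ?_⟩
          show Function.update (fun w => (ν w).val) v b (gargs i) = b
          rw [hi]
          simp
        exact elt_rep J hW (hW.2.2.2.2.2 R₀ h₀ _ hguard b hmem)
      refine ⟨s.subtype (fun b => rep J hW b = b), ?_, ?_⟩
      · rw [Finset.card_subtype, Finset.filter_true_of_mem helt]
        exact hn
      · intro b' hb'
        have hb : b'.val ∈ s := Finset.mem_subtype.mp hb'
        obtain ⟨hguard, heval⟩ := hs b'.val hb
        constructor
        · show (List.ofFn fun i => Function.update ν v b' (gargs i)).map Subtype.val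
            ∈ J.rel (SRel.low R₀ h₀)
          rw [List.map_ofFn]
          have h2 : (Subtype.val ∘ fun i => Function.update ν v b' (gargs i))
              = fun i => Function.update (fun w => (ν w).val) v b'.val (gargs i) := by
            funext i
            exact congrFun (val_update J hW ν v b') (gargs i)
          rw [h2]
          exact hguard
        · rw [ih hφ, val_update J hW ν v b']
          exact heval

theorem wellformed_sub : WellFormed (DInterp J hW) := by
  have memiff : ∀ (r : (sSig σ).Rel) (a : (DInterp J hW).Dom),
      ([a] ∈ (DInterp J hW).rel r) ↔ [a.val] ∈ J.rel r := by
    intro r a; rfl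
  have memiff2 : ∀ (r : (sSig σ).Rel) (a b : (DInterp J hW).Dom),
      ([a, b] ∈ (DInterp J hW).rel r) ↔ [a.val, b.val] ∈ J.rel r := by
    intro r a b; rfl
  refine ⟨?_, ?_, ?_, ?_, ?_, ?_⟩
  · intro R h a ha
    exact hW.1 R h a.val ha
  · intro R h R' h' a ha ha'
    exact hW.2.1 R h R' h' a.val ha ha'
  · intro a
    exact hW.2.2.1 a.val
  · intro R h i t a hta
    exact hW.2.2.2.1 R h i t.val a.val hta
  · intro R h t ht i
    obtain ⟨a, ha, hu⟩ := hW.2.2.2.2.1 R h t.val ht i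
    have haelt : [a] ∈ J.rel SRel.elt := (hW.2.2.2.1 R h i t.val a ha).2
    refine ⟨⟨a, elt_rep J hW haelt⟩, ha, ?_⟩
    intro b hb
    exact Subtype.ext (hu b.val hb)
  · intro R h l hl a hal
    have : a.val ∈ l.map Subtype.val := List.mem_map_of_mem (f := Subtype.val) hal
    exact hW.2.2.2.2.2 R h _ hl a.val this

theorem redfree_sub : RedundancyFree (DInterp J hW) := by
  intro R h t t' f hf
  have hrel : REq J t.val t'.val :=
    Or.inr ⟨R, h, fun i => (f i).val, fun i => (hf i)⟩
  have : rep J hW t.val = rep J hW t'.val := rep_eq_of_rel J hW hrel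
  rw [t.property, t'.property] at this
  exact Subtype.ext this

end RFAux

/-- if `Θ` (the conjunction of the existential closure of `SHR(F)`,
a GC² theory `Th` over the arity-≤2 relations, `SHR(Δ)`, `Wellformed(σs)` and
`¬SHR(q)`) has a model, then it has a redundancy-free model. -/
theorem redundancy_free_model (σ : Sig) {nF nq : ℕ} (F : Conj σ (Fin nF))
    (q : Conj σ (Fin nq)) (Th : Set (GC2 (sSig σ))) (hTh : ∀ φ ∈ Th, GC2.onlyLow φ)
    (Δ : Set (ExRule σ)) :
    (∃ J : Interp (sSig σ),
      (∃ ν, satConj J ν (shredConj F)) ∧ satTheory J Th ∧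
      (∀ τ ∈ Δ, satRule J (shredRule τ)) ∧ WellFormed J ∧
      ¬ (∃ ν, satConj J ν (shredConj q))) →
    ∃ J : Interp (sSig σ),
      ((∃ ν, satConj J ν (shredConj F)) ∧ satTheory J Th ∧
        (∀ τ ∈ Δ, satRule J (shredRule τ)) ∧ WellFormed J ∧
        ¬ (∃ ν, satConj J ν (shredConj q))) ∧
      RedundancyFree J := by
  rintro ⟨J, ⟨ν₀, hν₀⟩, hThJ, hΔ, hW, hq⟩
  refine ⟨RFAux.DInterp J hW,
    ⟨⟨fun v => RFAux.push J hW (ν₀ v), RFAux.sat_push J hW hν₀⟩, ?_, ?_,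
      RFAux.wellformed_sub J hW, ?_⟩, RFAux.redfree_sub J hW⟩
  · intro φ hφ ν
    exact (RFAux.eval_iff J hW φ (hTh φ hφ) ν).mpr (hThJ φ hφ _)
  · intro τ hτ ν' hbody
    have hbJ : satConj J (fun v => (ν' v).val) (shredRule τ).body :=
      RFAux.sat_pull J hW hbody
    obtain ⟨μ, hμ⟩ := hΔ τ hτ _ hbJ
    refine ⟨fun e => RFAux.push J hW (μ e), ?_⟩
    have hp := RFAux.sat_push J hW hμ
    have heq : (fun v => RFAux.push J hW (Sum.elim (fun v => (ν' v).val) μ v))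
        = Sum.elim ν' (fun e => RFAux.push J hW (μ e)) := by
      funext v
      cases v with
      | inl b => exact Subtype.ext ((ν' b).property)
      | inr e => rfl
    rwa [heq] at hp
  · rintro ⟨ν', hν'⟩
    exact hq ⟨fun v => (ν' v).val, RFAux.sat_pull J hW hν'⟩
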